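/- Let E be a graph with G(E) infinite and let f : (G(E), τ_{F_cf}) → (P_λ, τ_{F_cf}) be an injective homomorphism. Then f(0) = 0. -/

import Mathlib

universe u

/-- A directed graph. -/
structure DiGraph : Type (u + 1) where
  V : Type u
  E : Type u
  s : E → V
  r : E → V

namespace DiGraph

variable (G : DiGraph.{u})

/-- A list of edges forms a valid path starting at vertex `v`. -/
def Valid (v : G.V) : List G.E → Prop
  | [] => True
  | e :: l => G.s e = v ∧ Valid (G.r e) l

/-- the endpoint of a list of edges starting at `v`. -/
def dst (v : G.V) : List G.E → G.V
  | [] => v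
  | e :: l => dst (G.r e) l

variable {G}

lemma dst_append (v : G.V) (l₁ l₂ : List G.E) :
    G.dst v (l₁ ++ l₂) = G.dst (G.dst v l₁) l₂ := by
  induction l₁ generalizing v with
  | nil => rfl
  | cons e t ih => simp [dst, ih]

lemma valid_append (v : G.V) (l₁ l₂ : List G.E) :
    G.Valid v (l₁ ++ l₂) ↔ G.Valid v l₁ ∧ G.Valid (G.dst v l₁) l₂ := by
  induction l₁ generalizing v with
  | nil => simp [Valid, dst]
  | cons e t ih => simp [Valid, dst, ih, and_assoc]

variable (G) in
/-- A (finite, directed) path in `G`: a source vertex together with a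
composable list of edges.  Paths of length zero are the vertices. -/
structure GPath : Type u where
  src : G.V
  edges : List G.E
  valid : G.Valid src edges

/-- The range (end vertex) of a path. -/
def GPath.rng (p : G.GPath) : G.V := G.dst p.src p.edges

/-- Concatenation of composable paths. -/
def GPath.comp (p q : G.GPath) (h : p.rng = q.src) : G.GPath :=
  ⟨p.src, p.edges ++ q.edges, by
    rw [valid_append]
    exact ⟨p.valid, by rw [show G.dst p.src p.edges = q.src from h]; exact q.valid⟩⟩

lemma GPath.comp_rng (p q : G.GPath) (h : p.rng = q.src) : (p.comp q h).rng = q.rng := by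
  show G.dst p.src (p.edges ++ q.edges) = _
  rw [dst_append, show G.dst p.src p.edges = q.src from h]; rfl

/-- If `p` is a prefix of the path `q`, the remaining path (so that
`q = p.comp (p.strip q _ _)`). -/
def GPath.strip (p q : G.GPath) (hs : p.src = q.src) (hp : p.edges <+: q.edges) : G.GPath :=
  ⟨p.rng, q.edges.drop p.edges.length, by
    obtain ⟨t, ht⟩ := hp
    have h1 : p.edges ++ q.edges.drop p.edges.length = q.edges := by
      rw [← ht, List.drop_left]
    have h2 : G.Valid p.src (p.edges ++ q.edges.drop p.edges.length) := by
      rw [h1, hs]; exact q.valid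
    exact ((valid_append _ _ _).mp h2).2⟩

lemma GPath.strip_rng (p q : G.GPath) (hs : p.src = q.src) (hp : p.edges <+: q.edges) :
    (p.strip q hs hp).rng = q.rng := by
  show G.dst p.rng (q.edges.drop p.edges.length) = G.dst q.src q.edges
  obtain ⟨t, ht⟩ := hp
  have h1 : p.edges ++ q.edges.drop p.edges.length = q.edges := by
    rw [← ht, List.drop_left]
  conv_rhs => rw [← hs, ← h1]
  rw [dst_append]; rfl

variable (G) in
/-- A nonzero element `a b⁻¹` of the graph inverse semigroup: a pair of
paths with the same range. -/
structure NZ : Type u where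
  a : G.GPath
  b : G.GPath
  h : a.rng = b.rng

/-- The graph inverse semigroup `G(E)` over a directed graph, in normal form:
the elements `a b⁻¹` with `r(a) = r(b)`, together with a zero element. -/
def GIS (G : DiGraph.{u}) : Type u := Option (NZ G)

instance : Zero (GIS G) := ⟨none⟩

open scoped Classical in
/-- The multiplication of the graph inverse semigroup:
`a b⁻¹ · c d⁻¹ = a c₁ d⁻¹` if `c = b c₁`, `a (d b₁)⁻¹` if `b = c b₁`, and `0` otherwise. -/
noncomputable instance : Mul (GIS G) :=
  ⟨fun x y =>
    match x, y with
    | none, _ => none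
    | some _, none => none
    | some ⟨a, b, hab⟩, some ⟨c, d, hcd⟩ =>
      if h : b.src = c.src ∧ b.edges <+: c.edges then
        some ⟨a.comp (b.strip c h.1 h.2) hab, d, by
          exact (GPath.comp_rng _ _ _).trans ((GPath.strip_rng _ _ _ _).trans hcd)⟩
      else if h' : c.src = b.src ∧ c.edges <+: b.edges then
        some ⟨a, d.comp (c.strip b h'.1 h'.2) hcd.symm, by
          exact hab.trans ((GPath.strip_rng _ _ _ _).symm.trans (GPath.comp_rng _ _ _).symm)⟩
      else none⟩

/-- The nonzero element `a b⁻¹` of `G(E)` determined by a pair of paths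
with the same range. -/
def GIS.nz (n : NZ G) : GIS G := some n

/-- The inversion of the graph inverse semigroup: `(u v⁻¹)⁻¹ = v u⁻¹`. -/
def GIS.inv : GIS G → GIS G
  | none => none
  | some ⟨a, b, h⟩ => some ⟨b, a, h.symm⟩

end DiGraph
namespace DiGraph

/-- The graph with one vertex and a loop for each element of `ι`. -/
def bouquet (ι : Type u) : DiGraph.{u} :=
  ⟨PUnit, ι, fun _ => PUnit.unit, fun _ => PUnit.unit⟩

/-- The polycyclic monoid `P_ι` on a set `ι` of generators, realized as the
graph inverse semigroup over the graph with one vertex and `ι` many loops. -/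
def PolyM (ι : Type u) : Type u := GIS (bouquet ι)

noncomputable instance (ι : Type u) : Mul (PolyM ι) :=
  inferInstanceAs (Mul (GIS (bouquet ι)))

instance (ι : Type u) : Zero (PolyM ι) := inferInstanceAs (Zero (GIS (bouquet ι)))

end DiGraph
namespace DiGraph

variable {G : DiGraph.{u}}

/-- membership predicate for the basic neighbourhoods of zero: all of
`a b⁻¹` with `a, b ∈ F`, together with `0`. -/
def inUF (F : Set G.GPath) : GIS G → Prop
  | none => True
  | some n => n.a ∈ F ∧ n.b ∈ F

/-- The basic neighbourhood `U_F(0) = {a b⁻¹ : a, b ∈ F} ∪ {0}` of zero. -/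
def UF (F : Set G.GPath) : Set (GIS G) := {x | inUF F x}

lemma inUF_mono {F₁ F₂ : Set G.GPath} (h : F₁ ⊆ F₂) :
    ∀ x : GIS G, inUF F₁ x → inUF F₂ x := by
  intro x hx
  cases x with
  | none => trivial
  | some n => exact ⟨h hx.1, h hx.2⟩

/-- The topology `τ_𝓕` on `G(E)` determined by a filter `𝓕` on `Path(E)`:
every nonzero element is isolated, and the sets `U_F(0)`, `F ∈ 𝓕`, form a
neighbourhood base at `0`. -/
def tauF (𝓕 : Filter G.GPath) : TopologicalSpace (GIS G) where
  IsOpen U := (0 : GIS G) ∈ U → ∃ F ∈ 𝓕, UF F ⊆ U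
  isOpen_univ := fun _ => ⟨Set.univ, Filter.univ_mem, Set.subset_univ _⟩
  isOpen_inter := fun U V hU hV h0 => by
    obtain ⟨F₁, hF₁, hs₁⟩ := hU h0.1
    obtain ⟨F₂, hF₂, hs₂⟩ := hV h0.2
    exact ⟨F₁ ∩ F₂, Filter.inter_mem hF₁ hF₂, fun x hx =>
      ⟨hs₁ (inUF_mono Set.inter_subset_left x hx),
       hs₂ (inUF_mono Set.inter_subset_right x hx)⟩⟩
  isOpen_sUnion := fun S hS h0 => by
    obtain ⟨U, hU, h0U⟩ := h0
    obtain ⟨F, hF, hs⟩ := hS U hU h0U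
    exact ⟨F, hF, hs.trans (Set.subset_sUnion_of_mem hU)⟩

/-- The prefix partial order on paths: `a ≤ b` iff `b` is a prefix of `a`. -/
def prefLE (a b : G.GPath) : Prop := b.src = a.src ∧ b.edges <+: a.edges

/-- An ideal of `(Path(E), ≤)`: a set `A` with `↓A = A`. -/
def IsIdeal (A : Set G.GPath) : Prop :=
  ∀ a b : G.GPath, prefLE a b → b ∈ A → a ∈ A

/-- A topological filter on `Path(E)`:
(i) for `F ∈ 𝓕` and paths `a, b` with `r(a) = r(b)`, the set
`F \ {bk : k ∈ Path(E), ak ∉ F}` belongs to `𝓕`;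
(ii) `𝓕` contains all cofinite subsets of `Path(E)`;
(iii) `𝓕` has a base consisting of ideals of `(Path(E), ≤)`. -/
def IsTopFilter (𝓕 : Filter G.GPath) : Prop :=
  (∀ F ∈ 𝓕, ∀ a b : G.GPath, a.rng = b.rng →
      F \ {p | ∃ (k : G.GPath) (h1 : b.rng = k.src) (h2 : a.rng = k.src),
        p = b.comp k h1 ∧ a.comp k h2 ∉ F} ∈ 𝓕) ∧
  𝓕 ≤ Filter.cofinite ∧
  (∀ F ∈ 𝓕, ∃ I ∈ 𝓕, I ⊆ F ∧ IsIdeal I)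

variable (G) in
/-- The filter `𝓕_ω` generated by the sets `U_n = {u ∈ Path(E) : |u| > n}`. -/
def Fomega : Filter G.GPath :=
  Filter.generate {S | ∃ n : ℕ, S = {u : G.GPath | n < u.edges.length}}

variable (G) in
/-- `U_n(0) = {u v⁻¹ : min{|u|,|v|} > n} ∪ {0}`. -/
def Un (n : ℕ) : Set (GIS G) := UF {u : G.GPath | n < u.edges.length}

end DiGraph

section Aux
open DiGraph

open scoped Classical in
lemma GIS.mul_def {G : DiGraph.{u}} (n m : NZ G) :
    GIS.nz n * GIS.nz m =
      (if h : n.b.src = m.a.src ∧ n.b.edges <+: m.a.edges then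
        GIS.nz ⟨n.a.comp (n.b.strip m.a h.1 h.2) n.h, m.b, by
          exact (GPath.comp_rng _ _ _).trans ((GPath.strip_rng _ _ _ _).trans m.h)⟩
      else if h' : m.a.src = n.b.src ∧ m.a.edges <+: n.b.edges then
        GIS.nz ⟨n.a, m.b.comp (m.a.strip n.b h'.1 h'.2) m.h.symm, by
          exact n.h.trans ((GPath.strip_rng _ _ _ _).symm.trans (GPath.comp_rng _ _ _).symm)⟩
      else (0 : GIS G)) := rfl

lemma GPath.ext' {G : DiGraph.{u}} {p q : G.GPath} (h1 : p.src = q.src)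
    (h2 : p.edges = q.edges) : p = q := by
  cases p; cases q; cases h1; cases h2; rfl

lemma NZ.ext' {G : DiGraph.{u}} {x y : NZ G} (h1 : x.a = y.a) (h2 : x.b = y.b) : x = y := by
  cases x; cases y; cases h1; cases h2; rfl

lemma bouquet_punit {ι : Type u} (v w : (bouquet ι).V) : v = w :=
  Subsingleton.elim (α := PUnit) v w

lemma bouquet_valid {ι : Type u} (v : (bouquet ι).V) (l : List ((bouquet ι).E)) :
    (bouquet ι).Valid v l := by
  induction l generalizing v with
  | nil => trivial
  | cons e t ih => exact ⟨bouquet_punit _ _, ih _⟩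

/-- path in the bouquet from a list -/
def mkP {ι : Type u} (l : List ι) : GPath (bouquet ι) :=
  ⟨PUnit.unit, l, bouquet_valid _ l⟩

end Aux

section Aux2
open DiGraph

open scoped Classical in
lemma PolyM.mul_nz {ι : Type u} (n m : NZ (bouquet ι)) :
    (GIS.nz n : PolyM ι) * GIS.nz m =
      (if h : n.b.src = m.a.src ∧ n.b.edges <+: m.a.edges then
        GIS.nz ⟨n.a.comp (n.b.strip m.a h.1 h.2) n.h, m.b, by
          exact (GPath.comp_rng _ _ _).trans ((GPath.strip_rng _ _ _ _).trans m.h)⟩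
      else if h' : m.a.src = n.b.src ∧ m.a.edges <+: n.b.edges then
        GIS.nz ⟨n.a, m.b.comp (m.a.strip n.b h'.1 h'.2) m.h.symm, by
          exact n.h.trans ((GPath.strip_rng _ _ _ _).symm.trans (GPath.comp_rng _ _ _).symm)⟩
      else (0 : PolyM ι)) := rfl

end Aux2

open DiGraph in
/-- Let `E` be a graph with `G(E)` infinite and let
`f : (G(E), τ_{𝓕_cf}) → (P_λ, τ_{𝓕_cf})` be an injective homomorphism.
Then `f 0 = 0`. -/
theorem injective_hom_maps_zero_to_zero (G : DiGraph.{u}) (ι : Type u)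
    [Infinite (GIS G)] (f : GIS G →ₙ* PolyM ι) (hf : Function.Injective f) :
    f 0 = 0 := by
  by_contra h0
  obtain ⟨m, hm⟩ : ∃ m, f 0 = GIS.nz m := by
    cases hx : f 0 with
    | none => exact absurd hx h0
    | some m => exact ⟨m, rfl⟩
  have habs : ∀ x : GIS G, f x * f 0 = f 0 := by
    intro x
    rw [← map_mul]
    congr 1
    cases x <;> rfl
  set L := m.a.edges.length with hL
  have hsub : Set.range f ⊆
      (fun k => (GIS.nz ⟨mkP (m.a.edges.take k), mkP (m.a.edges.take k),
        bouquet_punit _ _⟩ : PolyM ι)) '' Set.Iic L := by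
    rintro _ ⟨x, rfl⟩
    have h := habs x
    rw [hm] at h
    cases hx : f x with
    | none =>
      rw [hx] at h
      exact absurd (show (none : Option (NZ (bouquet ι))) = some m from h) (by simp)
    | some p =>
      rw [hx] at h
      replace h := (PolyM.mul_nz p m).symm.trans h
      by_cases h1 : p.b.src = m.a.src ∧ p.b.edges <+: m.a.edges
      · rw [dif_pos h1] at h
        have hinj : (⟨p.a.comp (p.b.strip m.a h1.1 h1.2) p.h, m.b, _⟩ : NZ (bouquet ι)) = m :=
          Option.some.inj h
        have hae : p.a.edges ++ m.a.edges.drop p.b.edges.length = m.a.edges :=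
          congrArg (fun n => n.a.edges) hinj
        have hble : p.b.edges.length ≤ m.a.edges.length := h1.2.length_le
        have hlen : p.a.edges.length = p.b.edges.length := by
          have := congrArg List.length hae
          simp only [List.length_append, List.length_drop] at this
          omega
        have hba : p.a.edges = m.a.edges.take p.a.edges.length := by
          have := congrArg (List.take p.a.edges.length) hae
          rwa [List.take_left] at this
        have hbb : p.b.edges = m.a.edges.take p.b.edges.length :=
          List.prefix_iff_eq_take.mp h1.2
        refine ⟨p.a.edges.length, by simp only [Set.mem_Iic]; omega, ?_⟩
        refine congrArg GIS.nz (NZ.ext' ?_ ?_)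
        · exact GPath.ext' (bouquet_punit _ _) hba.symm
        · exact GPath.ext' (bouquet_punit _ _) (by rw [hlen]; exact hbb.symm)
      · by_cases h2 : m.a.src = p.b.src ∧ m.a.edges <+: p.b.edges
        · rw [dif_neg h1] at h
          replace h := (dif_pos h2).symm.trans h
          have hinj : (⟨p.a, m.b.comp (m.a.strip p.b h2.1 h2.2) m.h.symm, _⟩ : NZ (bouquet ι)) = m :=
            Option.some.inj h
          have ha := congrArg (fun n : NZ (bouquet ι) => n.a.edges) hinj
          have hbe : m.b.edges ++ p.b.edges.drop m.a.edges.length = m.b.edges :=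
            congrArg (fun n => n.b.edges) hinj
          have hlen : p.b.edges.length ≤ m.a.edges.length := by
            have := congrArg List.length hbe
            simp only [List.length_append, List.length_drop] at this
            omega
          have hb : m.a.edges = p.b.edges :=
            h2.2.eq_of_length (le_antisymm h2.2.length_le hlen)
          refine ⟨L, by simp, ?_⟩
          refine congrArg GIS.nz (NZ.ext' ?_ ?_)
          · refine GPath.ext' (bouquet_punit _ _) ?_
            show m.a.edges.take L = p.a.edges
            rw [List.take_length]; exact ha.symm
          · refine GPath.ext' (bouquet_punit _ _) ?_
            show m.a.edges.take L = p.b.edges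
            rw [List.take_length]; exact hb
        · rw [dif_neg h1] at h
          exact absurd (show (none : Option (NZ (bouquet ι))) = some m from (dif_neg h2).symm.trans h) (by simp)
  have hfin : (Set.range f).Finite :=
    Set.Finite.subset ((Set.finite_Iic L).image _) hsub
  exact Set.infinite_range_of_injective hf hfin
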